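/- The minimizer of the Lagrangian L(X) = Tr(X g gᵀ) + λ(-log det(X X_{prev}⁻¹) + Tr(X X_{prev}⁻¹) - n) over positive definite X satisfies X⁻¹ = X_{prev}⁻¹ + g gᵀ/λ. -/

import Mathlib

open Matrix

section Aux

variable {m : ℕ}

/-- trace of a real hermitian matrix is the sum of eigenvalues -/
lemma aux_trace_eq_sum_eigenvalues {A : Matrix (Fin m) (Fin m) ℝ} (hA : A.IsHermitian) :
    A.trace = ∑ i, hA.eigenvalues i := by
  conv_lhs => rw [hA.spectral_theorem]
  rw [Unitary.conjStarAlgAut_apply, Matrix.trace_mul_cycle]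
  have h1 : (star (hA.eigenvectorUnitary : Matrix (Fin m) (Fin m) ℝ)) *
      (hA.eigenvectorUnitary : Matrix (Fin m) (Fin m) ℝ) = 1 :=
    Matrix.UnitaryGroup.star_mul_self _
  rw [h1, one_mul, Matrix.trace_diagonal]
  simp

/-- a real hermitian matrix with all eigenvalues 1 is the identity -/
lemma aux_eig_all_one {A : Matrix (Fin m) (Fin m) ℝ} (hA : A.IsHermitian)
    (h : ∀ i, hA.eigenvalues i = 1) : A = 1 := by
  have hd : Matrix.diagonal (RCLike.ofReal ∘ hA.eigenvalues) = (1 : Matrix (Fin m) (Fin m) ℝ) := by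
    have : RCLike.ofReal ∘ hA.eigenvalues = fun _ : Fin m => (1 : ℝ) := by
      funext i
      simp [h i]
    rw [this, Matrix.diagonal_one]
  calc A = (hA.eigenvectorUnitary : Matrix (Fin m) (Fin m) ℝ) *
        Matrix.diagonal (RCLike.ofReal ∘ hA.eigenvalues) *
        (star (hA.eigenvectorUnitary : Matrix (Fin m) (Fin m) ℝ)) := hA.spectral_theorem
    _ = (hA.eigenvectorUnitary : Matrix (Fin m) (Fin m) ℝ) *
        (star (hA.eigenvectorUnitary : Matrix (Fin m) (Fin m) ℝ)) := by rw [hd, mul_one]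
    _ = 1 := (Matrix.mem_unitaryGroup_iff).mp (hA.eigenvectorUnitary).2

/-- conjugation of a posdef matrix by an invertible hermitian matrix is posdef -/
lemma aux_conj_posDef {X S : Matrix (Fin m) (Fin m) ℝ} (hX : X.PosDef)
    (hS : S.IsHermitian) (hSu : IsUnit S) : (S * X * S).PosDef := by
  rw [Matrix.posDef_iff_dotProduct_mulVec]
  constructor
  · show (S * X * S)ᴴ = S * X * S
    rw [Matrix.conjTranspose_mul, Matrix.conjTranspose_mul, hS.eq, hX.isHermitian.eq,
      Matrix.mul_assoc]
  · intro x hx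
    have hinj : Function.Injective (S.mulVec) := Matrix.mulVec_injective_iff_isUnit.mpr hSu
    have hSx : S *ᵥ x ≠ 0 := by
      intro h
      apply hx
      apply hinj
      simpa using h
    have key : star x ⬝ᵥ (S * X * S) *ᵥ x = star (S *ᵥ x) ⬝ᵥ X *ᵥ (S *ᵥ x) := by
      calc star x ⬝ᵥ (S * X * S) *ᵥ x
          = star x ⬝ᵥ S *ᵥ ((X * S) *ᵥ x) := by rw [Matrix.mulVec_mulVec, Matrix.mul_assoc]
        _ = (star x ᵥ* S) ⬝ᵥ ((X * S) *ᵥ x) := Matrix.dotProduct_mulVec _ _ _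
        _ = star (S *ᵥ x) ⬝ᵥ X *ᵥ (S *ᵥ x) := by
            rw [Matrix.star_mulVec, hS.eq, Matrix.mulVec_mulVec]
    rw [key]
    exact hX.dotProduct_mulVec_pos hSx

/-- vecMulVec is positive semidefinite -/
lemma aux_vecMulVec_posSemidef (v : Fin m → ℝ) : (Matrix.vecMulVec v v).PosSemidef := by
  rw [Matrix.vecMulVec_eq (Fin 1)]
  have hcol : Matrix.replicateCol (Fin 1) v = (Matrix.replicateRow (Fin 1) v)ᴴ := by
    rw [Matrix.conjTranspose_replicateRow, star_trivial]
  rw [hcol]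
  exact Matrix.posSemidef_conjTranspose_mul_self _

/-- the key inequality: a posdef matrix with trace - log det ≤ n is the identity -/
lemma aux_key {A : Matrix (Fin m) (Fin m) ℝ} (hA : A.PosDef)
    (h : A.trace - Real.log A.det ≤ (m : ℝ)) : A = 1 := by
  set μ := hA.1.eigenvalues with hμ
  have hpos : ∀ i, 0 < μ i := hA.eigenvalues_pos
  have htr : A.trace = ∑ i, μ i := aux_trace_eq_sum_eigenvalues hA.1
  have hdet : A.det = ∏ i, μ i := by
    have := hA.1.det_eq_prod_eigenvalues
    simpa using this
  have hlog : Real.log A.det = ∑ i, Real.log (μ i) := by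
    rw [hdet, Real.log_prod]
    intro i _
    exact (hpos i).ne'
  have hsum : ∑ i, (μ i - Real.log (μ i) - 1) ≤ 0 := by
    have : ∑ i, (μ i - Real.log (μ i) - 1) = (∑ i, μ i) - (∑ i, Real.log (μ i)) - m := by
      rw [Finset.sum_sub_distrib, Finset.sum_sub_distrib]
      simp
    rw [this, ← htr, ← hlog]
    linarith
  have hterm : ∀ i ∈ Finset.univ, (0:ℝ) ≤ μ i - Real.log (μ i) - 1 := by
    intro i _
    have := Real.log_le_sub_one_of_pos (hpos i)
    linarith
  have hzero : ∀ i ∈ Finset.univ, μ i - Real.log (μ i) - 1 = 0 := by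
    rw [← Finset.sum_eq_zero_iff_of_nonneg hterm]
    exact le_antisymm hsum (Finset.sum_nonneg hterm)
  have hone : ∀ i, μ i = 1 := by
    intro i
    by_contra hne
    have := Real.log_lt_sub_one_of_pos (hpos i) hne
    have := hzero i (Finset.mem_univ i)
    linarith
  exact aux_eig_all_one hA.1 hone

/-- existence of a hermitian square root -/
lemma aux_sqrt {A : Matrix (Fin m) (Fin m) ℝ} (hA : A.PosDef) :
    ∃ S : Matrix (Fin m) (Fin m) ℝ, S * S = A ∧ S.IsHermitian := by
  open scoped MatrixOrder in
  exact ⟨CFC.sqrt A, CFC.sqrt_mul_sqrt_self A hA.posSemidef.nonneg,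
    (CFC.sqrt_nonneg A).posSemidef.1⟩

end Aux

theorem lagrangian_minimizer_inverse_update {n : ℕ}
    (Xprev : Matrix (Fin n) (Fin n) ℝ) (hXprev : Xprev.PosDef)
    (g : Fin n → ℝ) (lam : ℝ) (hlam : 0 < lam)
    (L : Matrix (Fin n) (Fin n) ℝ → ℝ)
    (hL : ∀ X : Matrix (Fin n) (Fin n) ℝ,
      L X = (X * Matrix.vecMulVec g g).trace +
        lam * (-Real.log ((X * Xprev⁻¹).det) + (X * Xprev⁻¹).trace - n))
    (X : Matrix (Fin n) (Fin n) ℝ) (hX : X.PosDef)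
    (hmin : ∀ Y : Matrix (Fin n) (Fin n) ℝ, Y.PosDef → L X ≤ L Y) :
    X⁻¹ = Xprev⁻¹ + lam⁻¹ • Matrix.vecMulVec g g := by
  set G := Matrix.vecMulVec g g with hGdef
  set M := Xprev⁻¹ + lam⁻¹ • G with hMdef
  have hG : G.PosSemidef := aux_vecMulVec_posSemidef g
  have hGs : (lam⁻¹ • G).PosSemidef := by
    rw [Matrix.posSemidef_iff_dotProduct_mulVec]
    constructor
    · show (lam⁻¹ • G)ᴴ = lam⁻¹ • G
      rw [Matrix.conjTranspose_smul, hG.1.eq, star_trivial]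
    · intro x
      have := hG.dotProduct_mulVec_nonneg x
      have h2 : star x ⬝ᵥ (lam⁻¹ • G) *ᵥ x = lam⁻¹ * (star x ⬝ᵥ G *ᵥ x) := by
        rw [Matrix.smul_mulVec, dotProduct_smul, smul_eq_mul]
      rw [h2]
      positivity
  have hM : M.PosDef := (hXprev.inv).add_posSemidef hGs
  have hMdet : M.det ≠ 0 := hM.det_pos.ne'
  -- the square root of M
  obtain ⟨S, hSS, hSH⟩ := aux_sqrt hM
  have hSdet : S.det ≠ 0 := by
    intro h
    have : M.det = S.det * S.det := by rw [← hSS, Matrix.det_mul]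
    rw [this, h, mul_zero] at hMdet
    exact hMdet rfl
  have hSu : IsUnit S := (Matrix.isUnit_iff_isUnit_det S).mpr hSdet.isUnit
  -- the conjugated matrix
  set A := S * X * S with hAdef
  have hA : A.PosDef := aux_conj_posDef hX hSH hSu
  -- trace identity
  have htrA : (X * M).trace = A.trace := by
    rw [← hSS, ← Matrix.mul_assoc, Matrix.trace_mul_comm (X * S) S, hAdef, ← Matrix.mul_assoc]
  -- det identity
  have hdetA : A.det = X.det * M.det := by
    rw [hAdef, Matrix.det_mul, Matrix.det_mul, ← hSS, Matrix.det_mul]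
    ring
  have hlogA : Real.log A.det = Real.log X.det + Real.log M.det := by
    rw [hdetA, Real.log_mul hX.det_pos.ne' hMdet]
  -- rewrite L in terms of M
  have hL' : ∀ Y : Matrix (Fin n) (Fin n) ℝ, Y.PosDef →
      L Y = lam * ((Y * M).trace - Real.log Y.det) + lam * (Real.log Xprev.det - n) := by
    intro Y hY
    rw [hL Y]
    have hdet1 : (Y * Xprev⁻¹).det = Y.det * Xprev.det⁻¹ := by
      rw [Matrix.det_mul, Matrix.det_nonsing_inv, Ring.inverse_eq_inv]
    have hlog1 : Real.log ((Y * Xprev⁻¹).det) = Real.log Y.det - Real.log Xprev.det := by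
      rw [hdet1, Real.log_mul hY.det_pos.ne' (inv_ne_zero hXprev.det_pos.ne'), Real.log_inv]
      ring
    have htr1 : (Y * M).trace = (Y * Xprev⁻¹).trace + lam⁻¹ * (Y * G).trace := by
      rw [hMdef, Matrix.mul_add, Matrix.trace_add, Matrix.mul_smul, Matrix.trace_smul,
        smul_eq_mul]
    rw [hlog1, htr1]
    field_simp
    ring
  -- compute L at M⁻¹
  have hMinv : (M⁻¹).PosDef := hM.inv
  have hMM : M⁻¹ * M = 1 := Matrix.nonsing_inv_mul M hMdet.isUnit
  have hLMinv : L M⁻¹ = lam * ((n : ℝ) + Real.log M.det) + lam * (Real.log Xprev.det - n) := by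
    rw [hL' M⁻¹ hMinv, hMM]
    have h1 : (1 : Matrix (Fin n) (Fin n) ℝ).trace = (n : ℝ) := by
      rw [Matrix.trace_one]
      simp
    have h2 : Real.log (M⁻¹).det = -Real.log M.det := by
      rw [Matrix.det_nonsing_inv, Ring.inverse_eq_inv, Real.log_inv]
    rw [h1, h2]
    ring
  -- compute L at X and use minimality
  have hLX : L X = lam * (A.trace - Real.log A.det + Real.log M.det) +
      lam * (Real.log Xprev.det - n) := by
    rw [hL' X hX, htrA, hlogA]
    ring
  have hineq : A.trace - Real.log A.det ≤ (n : ℝ) := by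
    have := hmin M⁻¹ hMinv
    rw [hLX, hLMinv] at this
    have h3 : lam * (A.trace - Real.log A.det + Real.log M.det) ≤
        lam * ((n : ℝ) + Real.log M.det) := by linarith
    have h4 := le_of_mul_le_mul_left (by linarith : lam * (A.trace - Real.log A.det + Real.log M.det) ≤ lam * ((n : ℝ) + Real.log M.det)) hlam
    linarith
  -- conclude A = 1
  have hA1 : A = 1 := aux_key hA hineq
  -- hence X = M⁻¹
  have hXM : X = M⁻¹ := by
    have hSinv : S⁻¹ * S = 1 := Matrix.nonsing_inv_mul S hSdet.isUnit
    have hSinv' : S * S⁻¹ = 1 := Matrix.mul_nonsing_inv S hSdet.isUnit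
    have : S⁻¹ * (S * X * S) * S⁻¹ = S⁻¹ * 1 * S⁻¹ := by rw [← hAdef, hA1]
    have hX' : X = S⁻¹ * S⁻¹ := by
      calc X = 1 * X * 1 := by rw [one_mul, mul_one]
        _ = (S⁻¹ * S) * X * (S * S⁻¹) := by rw [hSinv, hSinv']
        _ = S⁻¹ * (S * X * S) * S⁻¹ := by noncomm_ring
        _ = S⁻¹ * 1 * S⁻¹ := by rw [← hAdef, hA1]
        _ = S⁻¹ * S⁻¹ := by rw [mul_one]
    rw [hX', ← Matrix.mul_inv_rev, hSS]
  rw [hXM, Matrix.nonsing_inv_nonsing_inv M hMdet.isUnit]
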